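/- Let Ω ⊆ ℝⁿ be open, let f : Ω → ℝⁿ and A, B, M, N : Ω → ℝ be C¹ with ∂A/∂uⁱ = Σ_k (∂B/∂u^k)(∂f^k/∂uⁱ) and ∂M/∂uⁱ = Σ_k (∂N/∂u^k)(∂f^k/∂uⁱ) on Ω, and set p(u) = (1, u, B(u), N(u), 0), r(u) = (0, f(u), A(u), M(u), 1) ∈ ℝ^{n+4}. Suppose λ : Ω → ℝ is C¹ and ξ : Ω → ℝⁿ satisfies Df(u) ξ(u) = λ(u) ξ(u) on Ω, and assume the system is linearly degenerate in this family: Dλ(u)[ξ(u)] = 0 for all u ∈ Ω. Then the focal point map F = r − λ·p is constant along the rarefaction curves: DF(u)[ξ(u)] = 0 for all u ∈ Ω. (Geometrically, the developable surfaces of this family are conical.) -/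

import Mathlib

lemma lin_expand {n : ℕ} {E : Type*} [NormedAddCommGroup E] [NormedSpace ℝ E]
    (L : (Fin n → ℝ) →L[ℝ] E) (v : Fin n → ℝ) :
    L v = ∑ i, v i • L (Pi.single i 1) := by
  have hv : v = ∑ i, v i • (Pi.single i 1 : Fin n → ℝ) := by
    funext j
    simp [Finset.sum_apply, Pi.single_apply, mul_ite]
  conv_lhs => rw [hv]
  simp [map_sum]

lemma comp_fderiv {n : ℕ} {f : (Fin n → ℝ) → (Fin n → ℝ)} {u : Fin n → ℝ}
    (hfd : DifferentiableAt ℝ f u) (k : Fin n) :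
    fderiv ℝ (fun x => f x k) u =
      (ContinuousLinearMap.proj k).comp (fderiv ℝ f u) := by
  exact ((ContinuousLinearMap.proj (R := ℝ) (φ := fun _ : Fin n => ℝ) k).hasFDerivAt.comp u
    hfd.hasFDerivAt).fderiv

lemma key {n : ℕ} {f : (Fin n → ℝ) → (Fin n → ℝ)} {A B : (Fin n → ℝ) → ℝ}
    {u v : Fin n → ℝ} {c : ℝ}
    (hfd : DifferentiableAt ℝ f u)
    (hrel : ∀ i : Fin n, fderiv ℝ A u (Pi.single i 1) =
      ∑ k : Fin n, fderiv ℝ B u (Pi.single k 1) *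
        fderiv ℝ (fun x => f x k) u (Pi.single i 1))
    (hv : fderiv ℝ f u v = c • v) :
    fderiv ℝ A u v = c * fderiv ℝ B u v := by
  have hcomp : ∀ k : Fin n, ∀ w, fderiv ℝ (fun x => f x k) u w = fderiv ℝ f u w k := by
    intro k w; rw [comp_fderiv hfd k]; rfl
  rw [lin_expand (fderiv ℝ A u) v]
  have hswap : ∑ i, v i • fderiv ℝ A u (Pi.single i 1)
      = ∑ k, fderiv ℝ B u (Pi.single k 1) *
          ∑ i, v i * fderiv ℝ (fun x => f x k) u (Pi.single i 1) := by
    simp_rw [hrel, smul_eq_mul, Finset.mul_sum]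
    rw [Finset.sum_comm]
    exact Finset.sum_congr rfl fun k _ => Finset.sum_congr rfl fun i _ => by ring
  rw [hswap]
  have hk : ∀ k : Fin n, ∑ i, v i * fderiv ℝ (fun x => f x k) u (Pi.single i 1)
      = c * v k := by
    intro k
    have h2 := lin_expand ((ContinuousLinearMap.proj (R := ℝ)
      (φ := fun _ : Fin n => ℝ) k).comp (fderiv ℝ f u)) v
    simp only [ContinuousLinearMap.comp_apply, ContinuousLinearMap.proj_apply,
      smul_eq_mul] at h2
    simp_rw [hcomp]
    rw [← h2, hv, Pi.smul_apply, smul_eq_mul]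
  simp_rw [hk]
  rw [lin_expand (fderiv ℝ B u) v, Finset.mul_sum]
  exact Finset.sum_congr rfl fun k _ => by simp [smul_eq_mul]; ring

theorem stmt_12
    (n : ℕ) (Ω : Set (Fin n → ℝ)) (hΩ : IsOpen Ω)
    (f : (Fin n → ℝ) → (Fin n → ℝ))
    (A B M N : (Fin n → ℝ) → ℝ)
    (hf : ContDiffOn ℝ 1 f Ω) (hA : ContDiffOn ℝ 1 A Ω)
    (hB : ContDiffOn ℝ 1 B Ω) (hM : ContDiffOn ℝ 1 M Ω)
    (hN : ContDiffOn ℝ 1 N Ω)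
    (hAB : ∀ u ∈ Ω, ∀ i : Fin n,
      fderiv ℝ A u (Pi.single i 1) =
        ∑ k : Fin n, fderiv ℝ B u (Pi.single k 1) *
          fderiv ℝ (fun x => f x k) u (Pi.single i 1))
    (hMN : ∀ u ∈ Ω, ∀ i : Fin n,
      fderiv ℝ M u (Pi.single i 1) =
        ∑ k : Fin n, fderiv ℝ N u (Pi.single k 1) *
          fderiv ℝ (fun x => f x k) u (Pi.single i 1))
    (p r : (Fin n → ℝ) → ℝ × (Fin n → ℝ) × ℝ × ℝ × ℝ)
    (hp : ∀ u, p u = (1, u, B u, N u, 0))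
    (hr : ∀ u, r u = (0, f u, A u, M u, 1))
    (lam : (Fin n → ℝ) → ℝ) (ξ : (Fin n → ℝ) → (Fin n → ℝ))
    (hlam : ContDiffOn ℝ 1 lam Ω)
    (heig : ∀ u ∈ Ω, fderiv ℝ f u (ξ u) = lam u • ξ u)
    (hlindeg : ∀ u ∈ Ω, fderiv ℝ lam u (ξ u) = 0) :
    ∀ u ∈ Ω, fderiv ℝ (fun x => r x - lam x • p x) u (ξ u) = 0 := by
  intro u hu
  have hmem := hΩ.mem_nhds hu
  have hfd : DifferentiableAt ℝ f u := (hf.contDiffAt hmem).differentiableAt one_ne_zero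
  have hAd : DifferentiableAt ℝ A u := (hA.contDiffAt hmem).differentiableAt one_ne_zero
  have hBd : DifferentiableAt ℝ B u := (hB.contDiffAt hmem).differentiableAt one_ne_zero
  have hMd : DifferentiableAt ℝ M u := (hM.contDiffAt hmem).differentiableAt one_ne_zero
  have hNd : DifferentiableAt ℝ N u := (hN.contDiffAt hmem).differentiableAt one_ne_zero
  have hld : DifferentiableAt ℝ lam u := (hlam.contDiffAt hmem).differentiableAt one_ne_zero
  have hFeq : (fun x => r x - lam x • p x)
      = fun x => (-(lam x), f x - lam x • x, A x - lam x * B x,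
          M x - lam x * N x, (1 : ℝ)) := by
    funext x
    rw [hr, hp]
    simp [Prod.ext_iff, smul_eq_mul]
  rw [hFeq]
  have h1 : HasFDerivAt (fun x : Fin n → ℝ => -(lam x)) (-(fderiv ℝ lam u)) u :=
    hld.hasFDerivAt.neg
  have h2 : HasFDerivAt (fun x : Fin n → ℝ => f x - lam x • x)
      (fderiv ℝ f u - (lam u • ContinuousLinearMap.id ℝ (Fin n → ℝ)
        + (fderiv ℝ lam u).smulRight u)) u :=
    hfd.hasFDerivAt.sub (hld.hasFDerivAt.smul (hasFDerivAt_id u))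
  have h3 : HasFDerivAt (fun x : Fin n → ℝ => A x - lam x * B x)
      (fderiv ℝ A u - (lam u • fderiv ℝ B u + B u • fderiv ℝ lam u)) u :=
    hAd.hasFDerivAt.sub (hld.hasFDerivAt.mul hBd.hasFDerivAt)
  have h4 : HasFDerivAt (fun x : Fin n → ℝ => M x - lam x * N x)
      (fderiv ℝ M u - (lam u • fderiv ℝ N u + N u • fderiv ℝ lam u)) u :=
    hMd.hasFDerivAt.sub (hld.hasFDerivAt.mul hNd.hasFDerivAt)
  have h5 : HasFDerivAt (fun _ : Fin n → ℝ => (1 : ℝ)) (0 : (Fin n → ℝ) →L[ℝ] ℝ) u := hasFDerivAt_const 1 u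
  have hF := h1.prodMk (h2.prodMk (h3.prodMk (h4.prodMk h5)))
  rw [hF.fderiv]
  have hl0 := hlindeg u hu
  have heig0 := heig u hu
  have hA0 : fderiv ℝ A u (ξ u) = lam u * fderiv ℝ B u (ξ u) :=
    key hfd (hAB u hu) heig0
  have hM0 : fderiv ℝ M u (ξ u) = lam u * fderiv ℝ N u (ξ u) :=
    key hfd (hMN u hu) heig0
  ext
  · simp [hl0]
  · simp [heig0, hl0]
  · simp [hA0, hl0, smul_eq_mul]
  · simp [hM0, hl0, smul_eq_mul]
  · simp
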